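/- Let d ≥ 2 and let C ⊂ ℝ^d be a strictly convex analytic body with 0 in its interior, with support function P(t) = sup_{x∈C}(t,x). Let m_1, …, m_K be pairwise distinct elements of 𝒵 ⊂ ℤ^{d+1} and let l_1, …, l_K be real numbers. If Σ_{i=1}^K l_i · P( (m_i,x), (m_i,y), 0, …, 0 ) = 0 for all x, y ∈ ℝ^{d+1}, then l_1 = ⋯ = l_K = 0. (Here P is applied to the vector of ℝ^d whose first two coordinates are (m_i,x) and (m_i,y) and whose remaining d−2 coordinates are 0, and (m,x) is the standard inner product on ℝ^{d+1}.) -/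

import Mathlib

open MeasureTheory Filter Pointwise
open scoped ENNReal RealInnerProductSpace Real

noncomputable section

abbrev Torus (d : ℕ) := Fin d → AddCircle (1 : ℝ)

def torusProj {d : ℕ} (v : EuclideanSpace ℝ (Fin d)) : Torus d :=
  fun i => (v i : AddCircle (1 : ℝ))

def suppFn {d : ℕ} (C : Set (EuclideanSpace ℝ (Fin d))) (t : EuclideanSpace ℝ (Fin d)) : ℝ :=
  sSup ((fun x => (inner ℝ t x : ℝ)) '' C)

structure StrictlyConvexAnalyticBody (d : ℕ) where
  carrier : Set (EuclideanSpace ℝ (Fin d))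
  isCompact : IsCompact carrier
  convex : Convex ℝ carrier
  nonemptyInterior : (interior carrier).Nonempty
  strictConvex : StrictConvex ℝ carrier
  analyticSupport : AnalyticOnNhd ℝ (suppFn carrier) {(0 : EuclideanSpace ℝ (Fin d))}ᶜ
  posCurvature : ∀ t w : EuclideanSpace ℝ (Fin d), t ≠ 0 → w ≠ 0 → (inner ℝ t w : ℝ) = 0 →
    0 < iteratedDeriv 2 (fun s : ℝ => suppFn carrier (t + s • w)) 0

def discrepancy (d : ℕ) (C : Set (EuclideanSpace ℝ (Fin d))) (r : ℝ)
    (α x : Torus d) (N : ℕ) : ℝ :=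
  (∑ n ∈ Finset.range N,
    Set.indicator (torusProj '' (r • C)) (fun _ => (1:ℝ)) (x + n • α))
    - N * (volume (r • C)).toReal

def lamMeasure (d : ℕ) (a b : ℝ) : Measure (ℝ × Torus d × Torus d) :=
  ((volume (Set.Icc a b))⁻¹ • volume.restrict (Set.Icc a b)).prod
    ((volume : Measure (Torus d)).prod (volume : Measure (Torus d)))


/-- The vector `(u, v, 0, …, 0)` of `ℝ^d`. -/
def pairVec (d : ℕ) (u v : ℝ) : EuclideanSpace ℝ (Fin d) :=
  (EuclideanSpace.equiv (Fin d) ℝ).symm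
    (fun i => if (i : ℕ) = 0 then u else if (i : ℕ) = 1 then v else 0)

/-- The set `𝒵` of primitive vectors of `ℤ^{d+1}` whose first nonzero coordinate
is positive. -/
def ZSet (d : ℕ) : Set (Fin (d+1) → ℤ) :=
  {m | Finset.univ.gcd m = 1 ∧ ∀ i, (∀ j, j < i → m j = 0) → 0 ≤ m i}

def dotInt {n : ℕ} (m : Fin n → ℤ) (x : Fin n → ℝ) : ℝ := ∑ j, (m j : ℝ) * x j


lemma pairVec_apply {d : ℕ} (u v : ℝ) (i : Fin d) :
    pairVec d u v i = if (i : ℕ) = 0 then u else if (i : ℕ) = 1 then v else 0 := rfl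

lemma pairVec_smul {d : ℕ} (c u v : ℝ) : pairVec d (c*u) (c*v) = c • pairVec d u v := by
  ext i
  simp only [PiLp.smul_apply, smul_eq_mul, pairVec_apply]
  split_ifs <;> ring

lemma pairVec_zero {d : ℕ} : pairVec d 0 0 = 0 := by
  ext i
  simp [pairVec_apply]

lemma pairVec_ne_zero_snd {d : ℕ} (hd : 2 ≤ d) {u v : ℝ} (hv : v ≠ 0) :
    pairVec d u v ≠ 0 := by
  intro h
  have : pairVec d u v ⟨1, by omega⟩ = 0 := by rw [h]; rfl
  rw [pairVec_apply] at this
  simp at this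
  exact hv this

lemma pairVec_ne_zero_fst {d : ℕ} (hd : 2 ≤ d) {u v : ℝ} (hu : u ≠ 0) :
    pairVec d u v ≠ 0 := by
  intro h
  have : pairVec d u v ⟨0, by omega⟩ = 0 := by rw [h]; rfl
  rw [pairVec_apply] at this
  simp at this
  exact hu this

lemma suppFn_bddAbove {d : ℕ} {C : Set (EuclideanSpace ℝ (Fin d))} (hC : IsCompact C)
    (t : EuclideanSpace ℝ (Fin d)) : BddAbove ((fun x => (inner ℝ t x : ℝ)) '' C) :=
  (hC.image (continuous_const.inner continuous_id)).bddAbove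

lemma suppFn_zero {d : ℕ} {C : Set (EuclideanSpace ℝ (Fin d))} (hne : C.Nonempty) :
    suppFn C 0 = 0 := by
  unfold suppFn
  have : (fun x => (inner ℝ (0 : EuclideanSpace ℝ (Fin d)) x : ℝ)) '' C = {0} := by
    ext r
    simp only [inner_zero_left, Set.mem_image, Set.mem_singleton_iff]
    constructor
    · rintro ⟨x, -, h⟩; exact h.symm
    · rintro rfl; obtain ⟨x, hx⟩ := hne; exact ⟨x, hx, rfl⟩
  rw [this, csSup_singleton]

lemma suppFn_pos {d : ℕ} {C : Set (EuclideanSpace ℝ (Fin d))} (hC : IsCompact C)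
    (h0 : (0 : EuclideanSpace ℝ (Fin d)) ∈ interior C) {t : EuclideanSpace ℝ (Fin d)}
    (ht : t ≠ 0) : 0 < suppFn C t := by
  have hnh : C ∈ nhds (0 : EuclideanSpace ℝ (Fin d)) := mem_interior_iff_mem_nhds.1 h0
  obtain ⟨ε, hε, hball⟩ := Metric.mem_nhds_iff.1 hnh
  have htn : (0:ℝ) < ‖t‖ := norm_pos_iff.2 ht
  set x := (ε / (2 * ‖t‖)) • t with hx
  have hxC : x ∈ C := by
    apply hball
    rw [Metric.mem_ball, dist_zero_right, hx, norm_smul]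
    rw [Real.norm_eq_abs, abs_of_pos (by positivity)]
    have e : ε / (2 * ‖t‖) * ‖t‖ = ε / 2 := by
      field_simp
    rw [e]; linarith
  have hin : (inner ℝ t x : ℝ) = (ε / (2 * ‖t‖)) * ‖t‖^2 := by
    rw [hx, real_inner_smul_right, real_inner_self_eq_norm_sq]
  have hpos : (0:ℝ) < inner ℝ t x := by rw [hin]; positivity
  have := le_csSup (suppFn_bddAbove hC t) (Set.mem_image_of_mem _ hxC)
  calc (0:ℝ) < (inner ℝ t x : ℝ) := hpos
    _ ≤ suppFn C t := this

lemma suppFn_smul {d : ℕ} {C : Set (EuclideanSpace ℝ (Fin d))} (hC : IsCompact C)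
    (hne : C.Nonempty) {c : ℝ} (hc : 0 < c) (t : EuclideanSpace ℝ (Fin d)) :
    suppFn C (c • t) = c * suppFn C t := by
  unfold suppFn
  have him : (fun x => (inner ℝ (c • t) x : ℝ)) '' C
      = (fun r => c * r) '' ((fun x => (inner ℝ t x : ℝ)) '' C) := by
    rw [← Set.image_comp]
    apply Set.image_congr
    intro x _
    simp only [Function.comp_apply, real_inner_smul_left]
  rw [him]
  exact (Monotone.map_csSup_of_continuousAt
    ((continuous_const.mul continuous_id).continuousAt)
    (fun a b hab => by simpa using mul_le_mul_of_nonneg_left hab hc.le)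
    (hne.image _) (suppFn_bddAbove hC t)).symm


lemma dotInt_smul {n : ℕ} (m : Fin n → ℤ) (s : ℝ) (x : Fin n → ℝ) :
    dotInt m (s • x) = s * dotInt m x := by
  unfold dotInt
  rw [Finset.mul_sum]
  apply Finset.sum_congr rfl
  intro j _
  simp [Pi.smul_apply, smul_eq_mul]; ring

lemma dotInt_add_smul {n : ℕ} (m : Fin n → ℤ) (x : Fin n → ℝ) (t : ℝ) (y : Fin n → ℝ) :
    dotInt m (x + t • y) = dotInt m x + t * dotInt m y := by
  unfold dotInt
  rw [Finset.mul_sum, ← Finset.sum_add_distrib]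
  apply Finset.sum_congr rfl
  intro j _
  simp [Pi.add_apply, Pi.smul_apply, smul_eq_mul]; ring

lemma dotInt_zero {n : ℕ} (m : Fin n → ℤ) : dotInt m 0 = 0 := by simp [dotInt]

lemma zset_ne_zero {n : ℕ} {a : Fin (n+1) → ℤ} (ha : a ∈ ZSet n) : a ≠ 0 := by
  intro h
  have h1 := ha.1
  rw [h] at h1
  have h2 : Finset.univ.gcd (0 : Fin (n+1) → ℤ) = 0 :=
    Finset.gcd_eq_zero_iff.2 (by simp)
  rw [h2] at h1
  exact absurd h1 (by norm_num)

lemma zset_first_pos {n : ℕ} {a : Fin (n+1) → ℤ} (ha : a ∈ ZSet n) :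
    ∃ i, 0 < a i ∧ ∀ j, j < i → a j = 0 := by
  have hne : (Finset.univ.filter (fun i => a i ≠ 0)).Nonempty := by
    rcases Function.ne_iff.1 (zset_ne_zero ha) with ⟨i, hi⟩
    have hi' : a i ≠ 0 := by simpa using hi
    exact ⟨i, by simp [hi']⟩
  set i := (Finset.univ.filter (fun i => a i ≠ 0)).min' hne with hidef
  have hi : a i ≠ 0 := by
    have := (Finset.univ.filter (fun i => a i ≠ 0)).min'_mem hne
    simpa using this
  have hjz : ∀ j, j < i → a j = 0 := by
    intro j hj
    by_contra hja
    have : i ≤ j := Finset.min'_le _ j (by simp [hja])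
    exact absurd hj (not_lt.2 this)
  refine ⟨i, ?_, hjz⟩
  have := ha.2 i hjz
  omega

/-- two distinct elements of ZSet can be separated by a real vector. -/
lemma exists_sep_vec {n : ℕ} {a b : Fin (n+1) → ℤ} (ha : a ∈ ZSet n) (hb : b ∈ ZSet n)
    (hab : a ≠ b) : ∃ x : Fin (n+1) → ℝ, dotInt a x = 0 ∧ dotInt b x ≠ 0 := by
  by_contra hcon
  push_neg at hcon
  -- hcon : ∀ x, dotInt a x = 0 → dotInt b x = 0
  set S : ℤ := ∑ j, a j * a j with hSdef
  set S' : ℤ := ∑ j, a j * b j with hS'def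
  have hSpos : 0 < S := by
    rcases Function.ne_iff.1 (zset_ne_zero ha) with ⟨i, hi⟩
    have hi' : a i ≠ 0 := by simpa using hi
    apply Finset.sum_pos'
    · intro j _; exact mul_self_nonneg _
    · exact ⟨i, Finset.mem_univ _, mul_self_pos.2 hi'⟩
  have hScast : (S : ℝ) = ∑ x, (a x : ℝ) * (a x : ℝ) := by
    rw [hSdef]; push_cast; rfl
  have hS'cast : (S' : ℝ) = ∑ x, (a x : ℝ) * (b x : ℝ) := by
    rw [hS'def]; push_cast; rfl
  have key : ∀ j, S * b j = S' * a j := by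
    intro j
    set x : Fin (n+1) → ℝ := fun i => (if i = j then (S:ℝ) else 0) - (a j : ℝ) * (a i : ℝ)
      with hxdef
    have hax : dotInt a x = 0 := by
      unfold dotInt
      simp only [hxdef, mul_sub, Finset.sum_sub_distrib, mul_ite, mul_zero,
        Finset.sum_ite_eq', Finset.mem_univ, if_true]
      rw [sub_eq_zero, hScast, Finset.mul_sum]
      apply Finset.sum_congr rfl
      intro i _; ring
    have hbx := hcon x hax
    unfold dotInt at hbx
    simp only [hxdef, mul_sub, Finset.sum_sub_distrib, mul_ite, mul_zero,
      Finset.sum_ite_eq', Finset.mem_univ, if_true] at hbx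
    rw [sub_eq_zero] at hbx
    have hcast : ((S * b j : ℤ) : ℝ) = ((S' * a j : ℤ) : ℝ) := by
      push_cast
      calc (S:ℝ) * (b j : ℝ) = (b j : ℝ) * (S : ℝ) := by ring
        _ = ∑ x, (b x : ℝ) * ((a j : ℝ) * (a x : ℝ)) := hbx
        _ = (a j : ℝ) * ∑ x, (a x : ℝ) * (b x : ℝ) := by
              rw [Finset.mul_sum]
              apply Finset.sum_congr rfl
              intro i _; ring
        _ = (S' : ℝ) * (a j : ℝ) := by rw [hS'cast]; ring
    exact_mod_cast hcast
  have hgcd1 : Finset.univ.gcd (fun j => S * b j) = S := by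
    rw [Finset.gcd_mul_left, hb.1, mul_one, Int.normalize_of_nonneg hSpos.le]
  have heqf : Finset.univ.gcd (fun j => S * b j) = Finset.univ.gcd (fun j => S' * a j) := by
    simp only [key]
  have hgcd2 : Finset.univ.gcd (fun j => S' * a j) = normalize S' := by
    rw [Finset.gcd_mul_left, ha.1, mul_one]
  have hSnorm : S = normalize S' := by rw [← hgcd1, heqf, hgcd2]
  rcases le_or_gt 0 S' with hS' | hS'
  · -- S' = S, so b = a
    rw [Int.normalize_of_nonneg hS'] at hSnorm
    apply hab
    funext j
    have := key j
    rw [← hSnorm] at this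
    exact (mul_left_cancel₀ hSpos.ne' this).symm
  · -- S' = -S, so b = -a, contradicting sign conditions
    rw [Int.normalize_of_nonpos hS'.le] at hSnorm
    have hba : ∀ j, b j = -a j := by
      intro j
      have := key j
      have h2 : S * b j = S * (-a j) := by rw [this]; rw [show S' = -S by omega]; ring
      exact mul_left_cancel₀ hSpos.ne' h2
    obtain ⟨i, hai, hjz⟩ := zset_first_pos ha
    have hb0 : ∀ j, j < i → b j = 0 := fun j hj => by rw [hba j, hjz j hj]; ring
    have := hb.2 i hb0
    rw [hba i] at this
    omega

lemma existsSep {n K : ℕ} (a : Fin (n+1) → ℤ) (f : Fin K → (Fin (n+1) → ℤ))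
    (s : Finset (Fin K))
    (hf : ∀ i ∈ s, ∃ b : Fin (n+1) → ℝ, dotInt a b = 0 ∧ dotInt (f i) b ≠ 0) :
    ∃ x : Fin (n+1) → ℝ, dotInt a x = 0 ∧ ∀ i ∈ s, dotInt (f i) x ≠ 0 := by
  classical
  induction s using Finset.induction_on with
  | empty => exact ⟨0, dotInt_zero a, by simp⟩
  | @insert i s his ih =>
    obtain ⟨x, hx0, hx⟩ := ih (fun j hj => hf j (Finset.mem_insert_of_mem hj))
    obtain ⟨b, hb0, hbi⟩ := hf i (Finset.mem_insert_self i s)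
    set T : Finset ℝ :=
      (insert i s).image (fun j => -(dotInt (f j) x) / (dotInt (f j) b)) with hT
    obtain ⟨t, ht⟩ := Infinite.exists_notMem_finset T
    refine ⟨x + t • b, by rw [dotInt_add_smul, hx0, hb0]; ring, ?_⟩
    intro j hj
    rw [dotInt_add_smul]
    rcases Finset.mem_insert.1 hj with rfl | hjs
    · intro hcon
      apply ht
      rw [hT, Finset.mem_image]
      refine ⟨j, hj, ?_⟩
      field_simp
      linarith
    · by_cases hdb : dotInt (f j) b = 0
      · rw [hdb, mul_zero, add_zero]
        exact hx j hjs
      · intro hcon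
        apply ht
        rw [hT, Finset.mem_image]
        refine ⟨j, hj, ?_⟩
        field_simp
        linarith


theorem support_function_combinations_independent
    (d : ℕ) (hd : 2 ≤ d) (C : StrictlyConvexAnalyticBody d)
    (h0 : (0 : EuclideanSpace ℝ (Fin d)) ∈ interior C.carrier)
    (K : ℕ) (m : Fin K → (Fin (d+1) → ℤ)) (hm : ∀ i, m i ∈ ZSet d)
    (hinj : Function.Injective m) (l : Fin K → ℝ)
    (h : ∀ x y : Fin (d+1) → ℝ,
      ∑ i, l i * suppFn C.carrier (pairVec d (dotInt (m i) x) (dotInt (m i) y)) = 0) :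
    ∀ i, l i = 0 := by
  intro i₀
  by_contra hl0
  classical
  have hCne : C.carrier.Nonempty := ⟨0, interior_subset h0⟩
  -- separating vector a
  have hsep : ∀ i ∈ Finset.univ.erase i₀, ∃ b : Fin (d+1) → ℝ,
      dotInt (m i₀) b = 0 ∧ dotInt (m i) b ≠ 0 := by
    intro i hi
    exact exists_sep_vec (hm i₀) (hm i)
      (fun he => (Finset.mem_erase.1 hi).1 (hinj he).symm)
  obtain ⟨a, ha0, ha⟩ := existsSep (m i₀) m (Finset.univ.erase i₀) hsep
  set b : Fin (d+1) → ℝ := fun j => (m i₀ j : ℝ) with hbdef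
  set k : ℝ := dotInt (m i₀) b with hk
  have hkpos : 0 < k := by
    rw [hk, dotInt]
    rcases Function.ne_iff.1 (zset_ne_zero (hm i₀)) with ⟨i, hi⟩
    have hi' : (m i₀ i : ℝ) ≠ 0 := by
      simp only [Int.cast_ne_zero]
      simpa using hi
    apply Finset.sum_pos'
    · intro j _; exact mul_self_nonneg _
    · exact ⟨i, Finset.mem_univ _, mul_self_pos.2 hi'⟩
  set A : ℝ := suppFn C.carrier (pairVec d 0 k) with hA
  set B : ℝ := suppFn C.carrier (pairVec d 0 (-k)) with hB
  have hApos : 0 < A := suppFn_pos C.isCompact h0 (pairVec_ne_zero_snd hd hkpos.ne')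
  have hBpos : 0 < B :=
    suppFn_pos C.isCompact h0 (pairVec_ne_zero_snd hd (neg_ne_zero.2 hkpos.ne'))
  set ψ : ℝ → ℝ := fun s => suppFn C.carrier (pairVec d 0 (s * k)) with hψ
  set F : ℝ → ℝ := fun s => ∑ i ∈ Finset.univ.erase i₀,
      l i * suppFn C.carrier (pairVec d (dotInt (m i) a) (s * dotInt (m i) b)) with hF
  have hsum : ∀ s : ℝ, l i₀ * ψ s + F s = 0 := by
    intro s
    have H := h a (s • b)
    rw [← Finset.add_sum_erase _ _ (Finset.mem_univ i₀)] at H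
    simp only [dotInt_smul] at H
    rw [ha0, ← hk] at H
    exact H
  have hψeq : ψ = fun s => -F s / l i₀ := by
    funext s
    have hs := hsum s
    field_simp
    linear_combination hs
  have hFd : DifferentiableAt ℝ F 0 := by
    apply DifferentiableAt.fun_sum
    intro i hi
    apply DifferentiableAt.const_mul
    have hu : dotInt (m i) a ≠ 0 := ha i hi
    have haff : ∀ s : ℝ, pairVec d (dotInt (m i) a) (s * dotInt (m i) b)
        = pairVec d (dotInt (m i) a) 0 + s • pairVec d 0 (dotInt (m i) b) := by
      intro s
      ext jj
      simp only [pairVec_apply, PiLp.add_apply, PiLp.smul_apply, smul_eq_mul]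
      split_ifs <;> ring
    simp only [haff]
    have h1 : AnalyticAt ℝ
        (fun s : ℝ => pairVec d (dotInt (m i) a) 0 + s • pairVec d 0 (dotInt (m i) b)) 0 :=
      analyticAt_const.add
        (((ContinuousLinearMap.id ℝ ℝ).smulRight (pairVec d 0 (dotInt (m i) b))).analyticAt 0)
    have h2 : AnalyticAt ℝ (suppFn C.carrier)
        ((fun s : ℝ => pairVec d (dotInt (m i) a) 0 + s • pairVec d 0 (dotInt (m i) b)) 0) := by
      simp only [zero_smul, add_zero]
      exact C.analyticSupport _ (by simpa using pairVec_ne_zero_fst hd hu)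
    exact ((AnalyticAt.comp (g := suppFn C.carrier)
      (f := fun s : ℝ => pairVec d (dotInt (m i) a) 0 + s • pairVec d 0 (dotInt (m i) b))
      h2 h1).differentiableAt :)
  have hψd : DifferentiableAt ℝ ψ 0 := by
    rw [hψeq]
    exact hFd.neg.div_const _
  have hder := hψd.hasDerivAt
  rw [hasDerivAt_iff_tendsto_slope] at hder
  have hψ0 : ψ 0 = 0 := by
    rw [hψ]
    simp only [zero_mul, pairVec_zero]
    exact suppFn_zero hCne
  have hposA : ∀ s : ℝ, 0 < s → ψ s = s * A := by
    intro s hs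
    have hps := pairVec_smul (d := d) s 0 k
    rw [mul_zero] at hps
    rw [hψ]
    simp only
    rw [hps, suppFn_smul C.isCompact hCne hs]
  have hnegB : ∀ s : ℝ, s < 0 → ψ s = (-s) * B := by
    intro s hs
    have hps := pairVec_smul (d := d) (-s) 0 (-k)
    rw [mul_zero, show (-s) * (-k) = s * k by ring] at hps
    rw [hψ]
    simp only
    rw [hps, suppFn_smul C.isCompact hCne (by linarith)]
  have hsub1 : nhdsWithin (0:ℝ) (Set.Ioi 0) ≤ nhdsWithin (0:ℝ) {(0:ℝ)}ᶜ :=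
    nhdsWithin_mono _ (fun x hx => by simpa using (ne_of_gt hx))
  have hsub2 : nhdsWithin (0:ℝ) (Set.Iio 0) ≤ nhdsWithin (0:ℝ) {(0:ℝ)}ᶜ :=
    nhdsWithin_mono _ (fun x hx => by simpa using (ne_of_lt hx))
  have e1 : slope ψ 0 =ᶠ[nhdsWithin (0:ℝ) (Set.Ioi 0)] (fun _ => A) := by
    filter_upwards [self_mem_nhdsWithin] with s hs
    have hs' : (0:ℝ) < s := hs
    rw [slope_def_field, hψ0, hposA s hs', sub_zero, sub_zero,
      mul_comm, mul_div_assoc, div_self hs'.ne', mul_one]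
  have e2 : slope ψ 0 =ᶠ[nhdsWithin (0:ℝ) (Set.Iio 0)] (fun _ => -B) := by
    filter_upwards [self_mem_nhdsWithin] with s hs
    have hs' : s < (0:ℝ) := hs
    rw [slope_def_field, hψ0, hnegB s hs', sub_zero, sub_zero, div_eq_iff hs'.ne]
    ring
  have cA : deriv ψ 0 = A :=
    tendsto_nhds_unique ((hder.mono_left hsub1).congr' e1) tendsto_const_nhds
  have cB : deriv ψ 0 = -B :=
    tendsto_nhds_unique ((hder.mono_left hsub2).congr' e2) tendsto_const_nhds
  rw [cA] at cB
  linarith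

end
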